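/- Let A ∈ ℂ^{m×n} have singular value decomposition A = UΣV*, fix target rank r and oversampling p ≥ 0, set d = r+p, and let R^T ∈ ℝ^{n×d}. Partition Σ = diag(Σ₁, Σ₂) with Σ₁ the top r×r block, and set R₁ = V₁* R^T (r×d) and R₂ = V₂* R^T ((n−r)×d), where V = [V₁ V₂]. If R₁ has full row rank, then for Y = A R^T and P_Y the orthogonal projection onto the column space of Y, ‖(I − P_Y)A‖² ≤ ‖Σ₂‖² + ‖Σ₂ R₂ R₁†‖², where ‖·‖ is the spectral norm and R₁† is the Moore–Penrose pseudoinverse. -/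

import Mathlib

open Matrix

/-- Euclidean norm of a complex vector. -/
noncomputable def vnormC {α : Type*} [Fintype α] (x : α → ℂ) : ℝ :=
  Real.sqrt (∑ i, ‖x i‖ ^ 2)

/-- Spectral norm of a complex matrix. -/
noncomputable def specNormC {α β : Type*} [Fintype α] [Fintype β]
    (A : Matrix α β ℂ) : ℝ :=
  sSup {c : ℝ | ∃ x : β → ℂ, vnormC x = 1 ∧ c = vnormC (A.mulVec x)}

lemma vnormC_eq {α : Type*} [Fintype α] (x : α → ℂ) :
    vnormC x = ‖(WithLp.equiv 2 (α → ℂ)).symm x‖ := by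
  rw [EuclideanSpace.norm_eq]; rfl

lemma inner_mulVec {α β : Type*} [Fintype α] [Fintype β] [DecidableEq α] [DecidableEq β]
    (M : Matrix α β ℂ) (x : β → ℂ) (y : α → ℂ) :
    (inner ℂ ((WithLp.equiv 2 (α → ℂ)).symm (M.mulVec x)) ((WithLp.equiv 2 (α → ℂ)).symm y) : ℂ)
      = inner ℂ ((WithLp.equiv 2 (β → ℂ)).symm x) ((WithLp.equiv 2 (β → ℂ)).symm (Mᴴ.mulVec y)) := by
  have h1 : (WithLp.equiv 2 (α → ℂ)).symm (M.mulVec x)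
      = Matrix.toEuclideanLin M ((WithLp.equiv 2 (β → ℂ)).symm x) := by
    rfl
  have h2 : (WithLp.equiv 2 (β → ℂ)).symm (Mᴴ.mulVec y)
      = Matrix.toEuclideanLin Mᴴ ((WithLp.equiv 2 (α → ℂ)).symm y) := by
    rfl
  rw [h1, h2, Matrix.toEuclideanLin_conjTranspose_eq_adjoint, LinearMap.adjoint_inner_right]

lemma vnormC_sq {α : Type*} [Fintype α] (x : α → ℂ) :
    vnormC x ^ 2 = ∑ i, ‖x i‖ ^ 2 := by
  rw [vnormC, Real.sq_sqrt]
  positivity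

lemma vnormC_nonneg {α : Type*} [Fintype α] (x : α → ℂ) : 0 ≤ vnormC x :=
  Real.sqrt_nonneg _

lemma vnormC_smul {α : Type*} [Fintype α] (c : ℂ) (x : α → ℂ) :
    vnormC (c • x) = ‖c‖ * vnormC x := by
  rw [vnormC_eq, vnormC_eq, ← norm_smul]
  congr 1

lemma vnormC_sub_le {α : Type*} [Fintype α] (x y : α → ℂ) :
    vnormC (x - y) ≤ vnormC x + vnormC y := by
  rw [vnormC_eq, vnormC_eq, vnormC_eq]
  have : (WithLp.equiv 2 (α → ℂ)).symm (x - y)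
      = (WithLp.equiv 2 (α → ℂ)).symm x - (WithLp.equiv 2 (α → ℂ)).symm y := rfl
  rw [this]
  exact norm_sub_le _ _

/-- isometry under matrices with orthonormal columns -/
lemma vnormC_mulVec_of_orthonormal {α β : Type*} [Fintype α] [Fintype β]
    [DecidableEq α] [DecidableEq β]
    (U : Matrix α β ℂ) (hU : Uᴴ * U = 1) (x : β → ℂ) :
    vnormC (U.mulVec x) = vnormC x := by
  have h := inner_mulVec U x (U.mulVec x)
  rw [Matrix.mulVec_mulVec, hU, Matrix.one_mulVec] at h
  have h1 : ‖(WithLp.equiv 2 (α → ℂ)).symm (U.mulVec x)‖ ^ 2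
      = ‖(WithLp.equiv 2 (β → ℂ)).symm x‖ ^ 2 := by
    rw [← inner_self_eq_norm_sq (𝕜 := ℂ), ← inner_self_eq_norm_sq (𝕜 := ℂ), h]
  rw [vnormC_eq, vnormC_eq]
  nlinarith [norm_nonneg ((WithLp.equiv 2 (α → ℂ)).symm (U.mulVec x)), norm_nonneg ((WithLp.equiv 2 (β → ℂ)).symm x), h1]

/-- orthogonal projections are contractions -/
lemma vnormC_proj_le {α : Type*} [Fintype α] [DecidableEq α]
    (Q : Matrix α α ℂ) (hQh : Qᴴ = Q) (hQi : Q * Q = Q) (w : α → ℂ) :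
    vnormC (Q.mulVec w) ≤ vnormC w := by
  set a := (WithLp.equiv 2 (α → ℂ)).symm (Q.mulVec w) with ha
  set b := (WithLp.equiv 2 (α → ℂ)).symm w with hb
  have h := inner_mulVec Q w (Q.mulVec w)
  rw [Matrix.mulVec_mulVec, hQh, hQi] at h
  -- h : ⟪a, a⟫ = ⟪b, a⟫  (as ℂ)
  have h2 : ‖a‖ ^ 2 = RCLike.re (inner ℂ b a : ℂ) := by
    rw [ha, hb, ← h]
    exact (inner_self_eq_norm_sq _).symm
  have h3 : RCLike.re (inner ℂ b a : ℂ) ≤ ‖b‖ * ‖a‖ :=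
    le_trans (RCLike.re_le_norm _) (norm_inner_le_norm _ _)
  rw [vnormC_eq, vnormC_eq, ← ha, ← hb]
  nlinarith [norm_nonneg a, norm_nonneg b]

lemma specNormC_bddAbove {α β : Type*} [Fintype α] [Fintype β] [DecidableEq α] [DecidableEq β]
    (M : Matrix α β ℂ) :
    BddAbove {c : ℝ | ∃ x : β → ℂ, vnormC x = 1 ∧ c = vnormC (M.mulVec x)} := by
  classical
  set f := LinearMap.toContinuousLinearMap (Matrix.toEuclideanLin M) with hf
  refine ⟨‖f‖, ?_⟩
  rintro c ⟨x, hx, rfl⟩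
  have : vnormC (M.mulVec x) = ‖f ((WithLp.equiv 2 (β → ℂ)).symm x)‖ := by
    rw [vnormC_eq]
    have hfx : f ((WithLp.equiv 2 (β → ℂ)).symm x) = (WithLp.equiv 2 (α → ℂ)).symm (M.mulVec x) := by
      simp only [hf, LinearMap.coe_toContinuousLinearMap']
      rfl
    rw [hfx]
  rw [this]
  calc ‖f ((WithLp.equiv 2 (β → ℂ)).symm x)‖ ≤ ‖f‖ * ‖(WithLp.equiv 2 (β → ℂ)).symm x‖ :=
    f.le_opNorm _
  _ = ‖f‖ := by rw [← vnormC_eq, hx, mul_one]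

lemma specNormC_nonneg {α β : Type*} [Fintype α] [Fintype β] [DecidableEq α] [DecidableEq β]
    (M : Matrix α β ℂ) : 0 ≤ specNormC M := by
  classical
  by_cases hβ : Nonempty β
  · obtain ⟨j⟩ := hβ
    have hx : vnormC (Pi.single j 1 : β → ℂ) = 1 := by
      rw [vnormC]
      have : ∀ i, ‖(Pi.single j 1 : β → ℂ) i‖ ^ 2 = if i = j then 1 else 0 := by
        intro i
        by_cases hij : i = j <;> simp [hij, Pi.single_apply]
      rw [Finset.sum_congr rfl (fun i _ => this i)]
      simp
    have : vnormC (M.mulVec (Pi.single j 1)) ∈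
        {c : ℝ | ∃ x : β → ℂ, vnormC x = 1 ∧ c = vnormC (M.mulVec x)} :=
      ⟨_, hx, rfl⟩
    exact le_trans (vnormC_nonneg _) (le_csSup (specNormC_bddAbove M) this)
  · have : {c : ℝ | ∃ x : β → ℂ, vnormC x = 1 ∧ c = vnormC (M.mulVec x)} = ∅ := by
      ext c
      simp only [Set.mem_setOf_eq, Set.mem_empty_iff_false, iff_false, not_exists]
      rintro x ⟨hx, -⟩
      rw [vnormC] at hx
      have hempty : IsEmpty β := not_nonempty_iff.mp hβ
      rw [Finset.sum_of_isEmpty] at hx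
      simp at hx
    rw [specNormC, this, Real.sSup_empty]

lemma vnormC_mulVec_le {α β : Type*} [Fintype α] [Fintype β] [DecidableEq α] [DecidableEq β]
    (M : Matrix α β ℂ) (x : β → ℂ) :
    vnormC (M.mulVec x) ≤ specNormC M * vnormC x := by
  by_cases hx : vnormC x = 0
  · have : x = 0 := by
      rw [vnormC_eq, norm_eq_zero] at hx
      simpa using congrArg (WithLp.equiv 2 (β → ℂ)) hx
    simp [this, vnormC, Matrix.mulVec_zero]
  · have hpos : 0 < vnormC x := lt_of_le_of_ne (vnormC_nonneg x) (Ne.symm hx)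
    set u := ((vnormC x : ℂ)⁻¹) • x with hu
    have hnu : vnormC u = 1 := by
      rw [hu, vnormC_smul]
      rw [norm_inv, Complex.norm_real, Real.norm_of_nonneg (vnormC_nonneg x)]
      field_simp
    have hmem : vnormC (M.mulVec u) ∈
        {c : ℝ | ∃ y : β → ℂ, vnormC y = 1 ∧ c = vnormC (M.mulVec y)} := ⟨u, hnu, rfl⟩
    have hle := le_csSup (specNormC_bddAbove M) hmem
    have : vnormC (M.mulVec u) = (vnormC x)⁻¹ * vnormC (M.mulVec x) := by
      rw [hu, Matrix.mulVec_smul, vnormC_smul, norm_inv, Complex.norm_real,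
        Real.norm_of_nonneg (vnormC_nonneg x)]
    rw [this] at hle
    calc vnormC (M.mulVec x) = (vnormC x) * ((vnormC x)⁻¹ * vnormC (M.mulVec x)) := by
          field_simp
    _ ≤ vnormC x * specNormC M := mul_le_mul_of_nonneg_left hle (le_of_lt hpos)
    _ = _ := mul_comm _ _

lemma specNormC_le {α β : Type*} [Fintype α] [Fintype β]
    (M : Matrix α β ℂ) (B : ℝ) (hB : 0 ≤ B)
    (h : ∀ x : β → ℂ, vnormC x = 1 → vnormC (M.mulVec x) ≤ B) :
    specNormC M ≤ B := by
  apply Real.sSup_le _ hB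
  rintro c ⟨x, hx, rfl⟩
  exact h x hx

lemma idem_full_rank_eq_one {r : ℕ} (Q : Matrix (Fin r) (Fin r) ℂ)
    (hQi : Q * Q = Q) (hrank : Q.rank = r) : Q = 1 := by
  have hsurj : LinearMap.range Q.mulVecLin = ⊤ := by
    apply Submodule.eq_top_of_finrank_eq
    rw [show Module.finrank ℂ (LinearMap.range Q.mulVecLin) = Q.rank from rfl, hrank]
    simp [Module.finrank_pi]
  have hfix : ∀ v : Fin r → ℂ, Q.mulVec v = v := by
    intro v
    obtain ⟨w, hw⟩ := (LinearMap.range_eq_top.mp hsurj) v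
    rw [← hw]
    show Q.mulVec (Q.mulVec w) = Q.mulVec w
    rw [Matrix.mulVec_mulVec, hQi]
  ext i j
  have h := congrFun (hfix (Pi.single j 1)) i
  rw [Matrix.mulVec_single] at h
  simpa [Pi.single_apply, eq_comm, Matrix.one_apply] using h


set_option maxHeartbeats 1000000 in
/-- Deterministic range-finder bound (Theorem 9.1 of Halko–Martinsson–Tropp).
The matrix has `n = r + k` columns, indexed by `Fin r ⊕ Fin k` so that the
partition into the top `r` singular directions and the rest is explicit;
`d = r + p` is the sketch dimension. -/
theorem stmt3 {m r k p : ℕ}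
    (A U : Matrix (Fin m) (Fin r ⊕ Fin k) ℂ)
    (V : Matrix (Fin r ⊕ Fin k) (Fin r ⊕ Fin k) ℂ)
    (s : Fin r ⊕ Fin k → ℝ)
    -- `U` has orthonormal columns and `V` is unitary:
    (hU : Uᴴ * U = 1) (hV : Vᴴ * V = 1)
    -- singular values are nonnegative and nonincreasing:
    (hs0 : ∀ i, 0 ≤ s i)
    (hsmono : ∀ i j : Fin (r + k), i ≤ j →
      s (finSumFinEquiv.symm j) ≤ s (finSumFinEquiv.symm i))
    -- the SVD `A = U Σ V*`:
    (hA : A = U * Matrix.diagonal (fun i => (s i : ℂ)) * Vᴴ)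
    -- the real test matrix `Rᵀ ∈ ℝ^{n × d}` (given as `R ∈ ℝ^{d × n}`):
    (R : Matrix (Fin (r + p)) (Fin r ⊕ Fin k) ℝ)
    -- `R₁ = V₁* Rᵀ` and `R₂ = V₂* Rᵀ`:
    (R₁ : Matrix (Fin r) (Fin (r + p)) ℂ)
    (hR₁ : R₁ = (V.submatrix id Sum.inl)ᴴ * (Rᵀ.map (fun a => (a : ℂ))))
    (R₂ : Matrix (Fin k) (Fin (r + p)) ℂ)
    (hR₂ : R₂ = (V.submatrix id Sum.inr)ᴴ * (Rᵀ.map (fun a => (a : ℂ))))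
    -- `R₁` has full row rank:
    (hrank : R₁.rank = r)
    -- the sketch `Y = A Rᵀ`:
    (Y : Matrix (Fin m) (Fin (r + p)) ℂ)
    (hY : Y = A * (Rᵀ.map (fun a => (a : ℂ))))
    -- `P` is the orthogonal projector onto the column space of `Y`:
    (P : Matrix (Fin m) (Fin m) ℂ)
    (hP1 : P.IsHermitian) (hP2 : P * P = P)
    (hP3 : LinearMap.range P.mulVecLin = LinearMap.range Y.mulVecLin)
    -- `Rdag` is the Moore–Penrose pseudoinverse of `R₁`:
    (Rdag : Matrix (Fin (r + p)) (Fin r) ℂ)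
    (hmp1 : R₁ * Rdag * R₁ = R₁) (hmp2 : Rdag * R₁ * Rdag = Rdag)
    (hmp3 : (R₁ * Rdag)ᴴ = R₁ * Rdag) (hmp4 : (Rdag * R₁)ᴴ = Rdag * R₁) :
    specNormC ((1 - P) * A) ^ 2 ≤
      specNormC (Matrix.diagonal (fun i : Fin k => (s (Sum.inr i) : ℂ))) ^ 2 +
      specNormC (Matrix.diagonal (fun i : Fin k => (s (Sum.inr i) : ℂ)) * R₂ * Rdag) ^ 2 := by
  classical
  set Rc : Matrix (Fin r ⊕ Fin k) (Fin (r + p)) ℂ := Rᵀ.map (fun a => (a : ℂ)) with hRc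
  set D : Matrix (Fin r ⊕ Fin k) (Fin r ⊕ Fin k) ℂ :=
    Matrix.diagonal (fun i => (s i : ℂ)) with hD
  set S₂ : Matrix (Fin k) (Fin k) ℂ :=
    Matrix.diagonal (fun i : Fin k => (s (Sum.inr i) : ℂ)) with hS₂
  set a := specNormC S₂ with haa
  set b := specNormC (S₂ * R₂ * Rdag) with hbb
  have ha0 : 0 ≤ a := specNormC_nonneg _
  have hb0 : 0 ≤ b := specNormC_nonneg _
  -- Step A : R₁ * Rdag = 1
  have hQ1 : R₁ * Rdag = 1 := by
    apply idem_full_rank_eq_one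
    · calc R₁ * Rdag * (R₁ * Rdag) = (R₁ * Rdag * R₁) * Rdag := by
            rw [Matrix.mul_assoc, Matrix.mul_assoc, Matrix.mul_assoc]
      _ = R₁ * Rdag := by rw [hmp1]
    · refine le_antisymm (Matrix.rank_le_card_width _ |>.trans ?_) ?_
      · simp
      · calc r = R₁.rank := hrank.symm
        _ = (R₁ * Rdag * R₁).rank := by rw [hmp1]
        _ ≤ (R₁ * Rdag).rank := Matrix.rank_mul_le_left _ _
  -- rows of Vᴴ * Rc
  have hW1 : ∀ (i : Fin r) (q), (Vᴴ * Rc) (Sum.inl i) q = R₁ i q := by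
    intro i q
    rw [hR₁]
    simp [Matrix.mul_apply, Matrix.conjTranspose_apply, Matrix.submatrix_apply]
  have hW2 : ∀ (i : Fin k) (q), (Vᴴ * Rc) (Sum.inr i) q = R₂ i q := by
    intro i q
    rw [hR₂]
    simp [Matrix.mul_apply, Matrix.conjTranspose_apply, Matrix.submatrix_apply]
  -- the matrix M := (Vᴴ*Rc)*Rdag
  set M : Matrix (Fin r ⊕ Fin k) (Fin r) ℂ := (Vᴴ * Rc) * Rdag with hM
  have hM1 : ∀ (i : Fin r) (q), M (Sum.inl i) q = (1 : Matrix (Fin r) (Fin r) ℂ) i q := by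
    intro i q
    rw [← hQ1]
    simp only [hM, Matrix.mul_apply, hW1]
  have hM2 : ∀ (i : Fin k) (q), M (Sum.inr i) q = (R₂ * Rdag) i q := by
    intro i q
    simp only [hM, Matrix.mul_apply, hW2]
  -- projector 1 - P
  have h1Ph : (1 - P)ᴴ = 1 - P := by
    rw [Matrix.conjTranspose_sub, Matrix.conjTranspose_one, hP1.eq]
  have h1Pi : (1 - P) * (1 - P) = 1 - P := by
    rw [Matrix.sub_mul, Matrix.one_mul, Matrix.mul_sub, Matrix.mul_one, hP2, sub_self, sub_zero]
  -- unitarity of Vᴴ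
  have hVc : (Vᴴ)ᴴ * Vᴴ = 1 := by
    rw [Matrix.conjTranspose_conjTranspose]
    exact mul_eq_one_comm.mp hV
  -- pointwise bound
  have key : ∀ x : (Fin r ⊕ Fin k) → ℂ, vnormC x = 1 →
      vnormC (((1 - P) * A).mulVec x) ≤ Real.sqrt (a ^ 2 + b ^ 2) := by
    intro x hx
    set x' := Vᴴ.mulVec x with hx'
    set x₁ : Fin r → ℂ := fun i => x' (Sum.inl i) with hx₁
    set x₂ : Fin k → ℂ := fun i => x' (Sum.inr i) with hx₂
    set u := Y.mulVec (Rdag.mulVec x₁) with hu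
    -- (1-P) kills u
    have hukill : (1 - P).mulVec u = 0 := by
      have humem : u ∈ LinearMap.range P.mulVecLin := by
        rw [hP3]
        exact ⟨Rdag.mulVec x₁, rfl⟩
      obtain ⟨t, ht⟩ := humem
      have : P.mulVec u = u := by
        rw [← ht]
        show P.mulVec (P.mulVec t) = P.mulVec t
        rw [Matrix.mulVec_mulVec, hP2]
      rw [Matrix.sub_mulVec, Matrix.one_mulVec, this, sub_self]
    have hstep1 : ((1 - P) * A).mulVec x = (1 - P).mulVec (A.mulVec x - u) := by
      rw [Matrix.mulVec_sub, hukill, sub_zero, Matrix.mulVec_mulVec]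
    -- the vector g
    set g : (Fin r ⊕ Fin k) → ℂ := D.mulVec x' - (D * M).mulVec x₁ with hg
    have hAxu : A.mulVec x - u = U.mulVec g := by
      have hAx : A.mulVec x = U.mulVec (D.mulVec x') := by
        rw [hA, hx']
        simp only [Matrix.mulVec_mulVec, Matrix.mul_assoc]
      have hYU : Y = U * (D * (Vᴴ * Rc)) := by
        rw [hY, hA]
        simp only [Matrix.mul_assoc]
      have hun : u = U.mulVec ((D * M).mulVec x₁) := by
        rw [hu, hYU, hM]
        rw [Matrix.mulVec_mulVec, Matrix.mulVec_mulVec, Matrix.mul_assoc,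
          Matrix.mul_assoc, Matrix.mul_assoc]
      rw [hAx, hun, hg, Matrix.mulVec_sub]
    -- components of g
    have hginl : ∀ i : Fin r, g (Sum.inl i) = 0 := by
      intro i
      have h1 : (D.mulVec x') (Sum.inl i) = (s (Sum.inl i) : ℂ) * x₁ i := by
        rw [hD, Matrix.mulVec_diagonal]
      have h2 : ((D * M).mulVec x₁) (Sum.inl i) = (s (Sum.inl i) : ℂ) * x₁ i := by
        rw [← Matrix.mulVec_mulVec, hD, Matrix.mulVec_diagonal]
        congr 1
        have : M.mulVec x₁ (Sum.inl i) = ∑ q, M (Sum.inl i) q * x₁ q := rfl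
        rw [this, Finset.sum_congr rfl (fun q _ => by rw [hM1 i q])]
        simp [Matrix.one_apply, Finset.sum_ite_eq]
      simp only [hg, Pi.sub_apply, h1, h2, sub_self]
    have hginr : ∀ i : Fin k,
        g (Sum.inr i) = (S₂.mulVec x₂ - (S₂ * R₂ * Rdag).mulVec x₁) i := by
      intro i
      have h1 : (D.mulVec x') (Sum.inr i) = (s (Sum.inr i) : ℂ) * x₂ i := by
        rw [hD, Matrix.mulVec_diagonal]
      have h2 : ((D * M).mulVec x₁) (Sum.inr i) = ((S₂ * R₂ * Rdag).mulVec x₁) i := by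
        rw [← Matrix.mulVec_mulVec, hD, Matrix.mulVec_diagonal]
        have hMv : M.mulVec x₁ (Sum.inr i) = ((R₂ * Rdag).mulVec x₁) i := by
          show (∑ q, M (Sum.inr i) q * x₁ q) = ∑ q, (R₂ * Rdag) i q * x₁ q
          exact Finset.sum_congr rfl (fun q _ => by rw [hM2 i q])
        rw [hMv]
        show (s (Sum.inr i) : ℂ) * ∑ q, (R₂ * Rdag) i q * x₁ q
            = ∑ q, (S₂ * R₂ * Rdag) i q * x₁ q
        rw [Finset.mul_sum]
        refine Finset.sum_congr rfl (fun q _ => ?_)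
        rw [Matrix.mul_assoc, hS₂, Matrix.diagonal_mul, mul_assoc]
      have h3 : (S₂.mulVec x₂) i = (s (Sum.inr i) : ℂ) * x₂ i := by
        rw [hS₂, Matrix.mulVec_diagonal]
      simp only [hg, Pi.sub_apply, h1, h2, h3]
    -- norms
    set w : Fin k → ℂ := S₂.mulVec x₂ - (S₂ * R₂ * Rdag).mulVec x₁ with hw
    have hgnorm : vnormC g = vnormC w := by
      rw [vnormC, vnormC, Fintype.sum_sum_type]
      have : ∀ i : Fin r, ‖g (Sum.inl i)‖ ^ 2 = 0 := by
        intro i; rw [hginl i]; simp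
      rw [Finset.sum_congr rfl (fun i _ => this i), Finset.sum_const_zero, zero_add]
      congr 1
      exact Finset.sum_congr rfl (fun i _ => by rw [hginr i])
    -- norms of x₁, x₂
    have hx'norm : vnormC x' = 1 := by
      rw [hx', vnormC_mulVec_of_orthonormal Vᴴ hVc, hx]
    have hsplit : vnormC x₁ ^ 2 + vnormC x₂ ^ 2 = 1 := by
      rw [vnormC_sq, vnormC_sq]
      have : (1 : ℝ) = vnormC x' ^ 2 := by rw [hx'norm]; norm_num
      rw [this, vnormC_sq, Fintype.sum_sum_type]
    have hbound : vnormC (((1 - P) * A).mulVec x) ≤ a * vnormC x₂ + b * vnormC x₁ := by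
      have s1 : vnormC (((1 - P) * A).mulVec x) = vnormC ((1 - P).mulVec (A.mulVec x - u)) := by
        rw [hstep1]
      have s2 : vnormC ((1 - P).mulVec (A.mulVec x - u)) ≤ vnormC (A.mulVec x - u) :=
        vnormC_proj_le _ h1Ph h1Pi _
      have s3 : vnormC (A.mulVec x - u) = vnormC (U.mulVec g) := by rw [hAxu]
      have s4 : vnormC (U.mulVec g) = vnormC g := vnormC_mulVec_of_orthonormal U hU g
      have s5 : vnormC g = vnormC w := hgnorm
      have s6 : vnormC w ≤ vnormC (S₂.mulVec x₂) + vnormC ((S₂ * R₂ * Rdag).mulVec x₁) :=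
        vnormC_sub_le _ _
      have s7 : vnormC (S₂.mulVec x₂) ≤ a * vnormC x₂ := vnormC_mulVec_le _ _
      have s8 : vnormC ((S₂ * R₂ * Rdag).mulVec x₁) ≤ b * vnormC x₁ := vnormC_mulVec_le _ _
      rw [s1]
      refine s2.trans ?_
      rw [s3, s4, s5]
      exact s6.trans (add_le_add s7 s8)
    refine hbound.trans ?_
    rw [Real.le_sqrt (add_nonneg (mul_nonneg ha0 (vnormC_nonneg x₂)) (mul_nonneg hb0 (vnormC_nonneg x₁))) (by positivity)]
    nlinarith [sq_nonneg (a * vnormC x₁ - b * vnormC x₂), vnormC_nonneg x₁, vnormC_nonneg x₂,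
      hsplit, ha0, hb0]
  have hfinal : specNormC ((1 - P) * A) ≤ Real.sqrt (a ^ 2 + b ^ 2) :=
    specNormC_le _ _ (Real.sqrt_nonneg _) key
  have h0 : 0 ≤ specNormC ((1 - P) * A) := specNormC_nonneg _
  calc specNormC ((1 - P) * A) ^ 2 ≤ Real.sqrt (a ^ 2 + b ^ 2) ^ 2 :=
        pow_le_pow_left₀ h0 hfinal 2
    _ = a ^ 2 + b ^ 2 := Real.sq_sqrt (by positivity)
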